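/- Let ρ be an n×n complex density matrix and Π an orthogonal projection on ℂⁿ, and let δ ≥ 0 be a real number such that Tr(Π ρ) ≥ 1 − δ and Tr(Π ρ) > 0. Let ρ' := (1/Tr(Π ρ)) • (Π ρ Π) be the post-measurement state after applying the binary measurement (Π, I−Π) to ρ and post-selecting on outcome 1. Then the trace distance between ρ and ρ' satisfies d(ρ, ρ') ≤ 2·√δ. -/

import Mathlib

open Matrix
open scoped ComplexOrder

/-- The positive semidefinite square root of a positive semidefinite matrix, as defined in
the older Mathlib (`Matrix.PosSemidef.sqrt`, since removed). -/
noncomputable def Matrix.PosSemidef.sqrt {n : Type*} [Fintype n] [DecidableEq n] {𝕜 : Type*}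
    [RCLike 𝕜] {A : Matrix n n 𝕜} (hA : A.PosSemidef) : Matrix n n 𝕜 :=
  hA.1.eigenvectorUnitary.1 * diagonal ((↑) ∘ (Real.sqrt ∘ hA.1.eigenvalues)) *
  (star hA.1.eigenvectorUnitary : Matrix n n 𝕜)

lemma Matrix.PosSemidef.sqrt_eq_cfc {n : ℕ} {A : Matrix (Fin n) (Fin n) ℂ} (hA : A.PosSemidef) :
    hA.sqrt = cfc Real.sqrt A := by
  rw [hA.1.cfc_eq, Matrix.IsHermitian.cfc, Unitary.conjStarAlgAut_apply]
  rfl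

lemma Matrix.PosSemidef.spec_nonneg {n : ℕ} {A : Matrix (Fin n) (Fin n) ℂ} (hA : A.PosSemidef) :
    ∀ x ∈ spectrum ℝ A, 0 ≤ x := by
  intro x hx
  rw [hA.1.spectrum_real_eq_range_eigenvalues] at hx
  obtain ⟨i, rfl⟩ := hx
  exact hA.eigenvalues_nonneg i

lemma Matrix.PosSemidef.posSemidef_sqrt {n : ℕ} {A : Matrix (Fin n) (Fin n) ℂ}
    (hA : A.PosSemidef) : hA.sqrt.PosSemidef := by
  have hd : Matrix.PosSemidef (Matrix.diagonal ((↑) ∘ (Real.sqrt ∘ hA.1.eigenvalues)) :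
      Matrix (Fin n) (Fin n) ℂ) := by
    refine Matrix.PosSemidef.diagonal fun i => ?_
    exact Complex.zero_le_real.mpr (Real.sqrt_nonneg _)
  have := hd.mul_mul_conjTranspose_same (hA.1.eigenvectorUnitary : Matrix (Fin n) (Fin n) ℂ)
  simpa [Matrix.PosSemidef.sqrt, Matrix.star_eq_conjTranspose] using this

lemma Matrix.PosSemidef.sq_sqrt {n : ℕ} {A : Matrix (Fin n) (Fin n) ℂ}
    (hA : A.PosSemidef) : hA.sqrt ^ 2 = A := by
  have hsa : IsSelfAdjoint A := hA.1
  rw [hA.sqrt_eq_cfc, ← cfc_pow (f := Real.sqrt) (n := 2) (ha := hsa)]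
  conv_rhs => rw [← cfc_id' ℝ A hsa]
  exact cfc_congr fun x hx => Real.sq_sqrt (hA.spec_nonneg x hx)

lemma Matrix.PosSemidef.sqrt_mul_self {n : ℕ} {A : Matrix (Fin n) (Fin n) ℂ}
    (hA : A.PosSemidef) : hA.sqrt * hA.sqrt = A := by
  rw [← pow_two, hA.sq_sqrt]

lemma Matrix.PosSemidef.eq_sqrt_of_sq_eq {n : ℕ} {A : Matrix (Fin n) (Fin n) ℂ}
    (hA : A.PosSemidef) {B : Matrix (Fin n) (Fin n) ℂ} (hB : B.PosSemidef) (h : A ^ 2 = B) :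
    A = hB.sqrt := by
  have hsa : IsSelfAdjoint A := hA.1
  rw [hB.sqrt_eq_cfc, ← h, ← cfc_comp_pow (f := Real.sqrt) (n := 2) (ha := hsa)]
  conv_lhs => rw [← cfc_id' ℝ A hsa]
  exact cfc_congr fun x hx => (Real.sqrt_sq (hA.spec_nonneg x hx)).symm

/-- The trace distance `(1/2)·Tr(((ρ−σ)²)^{1/2})` between two Hermitian matrices
`ρ, σ`.  (For Hermitian `ρ, σ` one has `(ρ−σ)ᴴ(ρ−σ) = (ρ−σ)²`, and the square
root is the positive semidefinite square root.) -/
noncomputable def traceDist {n : ℕ} (ρ σ : Matrix (Fin n) (Fin n) ℂ) : ℝ :=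
  (((Matrix.posSemidef_conjTranspose_mul_self (ρ - σ)).sqrt).trace).re / 2

variable {n : ℕ}

/-- trace norm -/
noncomputable def tn (A : Matrix (Fin n) (Fin n) ℂ) : ℝ :=
  (((Matrix.posSemidef_conjTranspose_mul_self A).sqrt).trace).re

lemma tn_congr {A B : Matrix (Fin n) (Fin n) ℂ} (h : Aᴴ * A = Bᴴ * B) : tn A = tn B := by
  unfold tn
  congr 2
  refine (Matrix.posSemidef_conjTranspose_mul_self A).posSemidef_sqrt.eq_sqrt_of_sq_eq
    (Matrix.posSemidef_conjTranspose_mul_self B) ?_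
  rw [(Matrix.posSemidef_conjTranspose_mul_self A).sq_sqrt, h]

lemma tn_neg (A : Matrix (Fin n) (Fin n) ℂ) : tn (-A) = tn A :=
  tn_congr (by simp)

lemma tn_psd {A : Matrix (Fin n) (Fin n) ℂ} (hA : A.PosSemidef) : tn A = (A.trace).re := by
  unfold tn
  congr 3
  exact (hA.eq_sqrt_of_sq_eq (Matrix.posSemidef_conjTranspose_mul_self A)
    (by rw [pow_two, hA.1])).symm

lemma psd_smul {A : Matrix (Fin n) (Fin n) ℂ} (hA : A.PosSemidef) {c : ℝ} (hc : 0 ≤ c) :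
    ((c : ℂ) • A).PosSemidef := by
  have h := hA.mul_mul_conjTranspose_same ((Real.sqrt c : ℂ) • (1 : Matrix (Fin n) (Fin n) ℂ))
  have : ((Real.sqrt c : ℂ) • (1 : Matrix (Fin n) (Fin n) ℂ)) * A *
      ((Real.sqrt c : ℂ) • (1 : Matrix (Fin n) (Fin n) ℂ))ᴴ = (c : ℂ) • A := by
    simp [Matrix.conjTranspose_smul, Matrix.smul_mul, Matrix.mul_smul, smul_smul,
      ← Complex.ofReal_mul, Real.mul_self_sqrt hc]
  rwa [this] at h

lemma tn_smul {A : Matrix (Fin n) (Fin n) ℂ} {c : ℝ} (hc : 0 ≤ c) :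
    tn ((c : ℂ) • A) = c * tn A := by
  unfold tn
  have key : (Matrix.posSemidef_conjTranspose_mul_self ((c:ℂ) • A)).sqrt
      = (c : ℂ) • (Matrix.posSemidef_conjTranspose_mul_self A).sqrt := by
    refine ((psd_smul (Matrix.posSemidef_conjTranspose_mul_self A).posSemidef_sqrt hc).eq_sqrt_of_sq_eq
      (Matrix.posSemidef_conjTranspose_mul_self _) ?_).symm
    have hs := (Matrix.posSemidef_conjTranspose_mul_self A).sq_sqrt
    rw [pow_two] at hs ⊢
    rw [Matrix.smul_mul, Matrix.mul_smul, smul_smul, hs]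
    simp [Matrix.conjTranspose_smul, Matrix.smul_mul, Matrix.mul_smul, smul_smul]
    ring_nf
    ext i j
    simp [Matrix.smul_apply, Complex.real_smul]
  rw [key, Matrix.trace_smul]
  simp

lemma trace_re_nonneg {A : Matrix (Fin n) (Fin n) ℂ} (hA : A.PosSemidef) :
    0 ≤ (A.trace).re := by
  rw [Matrix.trace]
  simp only [Complex.re_sum]
  refine Finset.sum_nonneg fun i _ => ?_
  have := hA.re_dotProduct_nonneg (Pi.single i 1)
  simpa [dotProduct, Matrix.mulVec, Pi.single_apply, Finset.sum_ite_eq] using this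

lemma trace_real {A : Matrix (Fin n) (Fin n) ℂ} (hA : A.IsHermitian) :
    A.trace = ((A.trace).re : ℂ) := by
  have h : star A.trace = A.trace := by
    rw [← Matrix.trace_conjTranspose, hA.eq]
  exact (Complex.conj_eq_iff_re.mp h).symm

section spectral

variable {V : Matrix (Fin n) (Fin n) ℂ}

lemma conj_mul_conj (hV : star V * V = 1) (d e : Fin n → ℂ) :
    (V * Matrix.diagonal d * star V) * (V * Matrix.diagonal e * star V)
      = V * Matrix.diagonal (fun i => d i * e i) * star V := by
  have h1 : (V * Matrix.diagonal d * star V) * (V * Matrix.diagonal e * star V)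
      = V * (Matrix.diagonal d * (star V * V) * Matrix.diagonal e) * star V := by
    simp only [Matrix.mul_assoc]
  rw [h1, hV, Matrix.mul_one, Matrix.diagonal_mul_diagonal]

lemma conj_trace (hV : star V * V = 1) (d : Fin n → ℂ) :
    (V * Matrix.diagonal d * star V).trace = ∑ i, d i := by
  rw [Matrix.trace_mul_cycle, hV, Matrix.one_mul, Matrix.trace_diagonal]

lemma conj_conjTranspose (d : Fin n → ℂ) :
    (V * Matrix.diagonal d * star V)ᴴ
      = V * Matrix.diagonal (fun i => star (d i)) * star V := by
  rw [← Matrix.star_eq_conjTranspose, Matrix.star_mul, Matrix.star_mul, star_star,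
    Matrix.star_eq_conjTranspose (Matrix.diagonal d), Matrix.diagonal_conjTranspose]
  have : star d = fun i => star (d i) := rfl
  rw [this, Matrix.mul_assoc]

lemma entry_norm_le_one {M : Matrix (Fin n) (Fin n) ℂ} (hM : Mᴴ * M = 1) (i j : Fin n) :
    ‖M i j‖ ≤ 1 := by
  have h0 := congrArg (fun N => (N j j).re) hM
  simp only [Matrix.mul_apply, Matrix.conjTranspose_apply, Complex.re_sum,
    Matrix.one_apply_eq, Complex.one_re] at h0
  have h : ∑ k, ‖M k j‖ ^ 2 = 1 := by
    rw [← h0]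
    refine Finset.sum_congr rfl fun k _ => ?_
    have h2 : star (M k j) * M k j = ((Complex.normSq (M k j) : ℝ) : ℂ) := by
      rw [Complex.star_def, mul_comm, Complex.mul_conj]
    rw [h2, Complex.ofReal_re, Complex.normSq_eq_norm_sq]
  have h1 : ‖M i j‖ ^ 2 ≤ 1 := by
    rw [← h]
    exact Finset.single_le_sum (fun k _ => sq_nonneg (‖M k j‖)) (Finset.mem_univ i)
  nlinarith [norm_nonneg (M i j)]

lemma tn_eq_sum_abs {A : Matrix (Fin n) (Fin n) ℂ} (hA : A.IsHermitian) :
    tn A = ∑ i, |hA.eigenvalues i| := by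
  set V : Matrix (Fin n) (Fin n) ℂ := (hA.eigenvectorUnitary : Matrix (Fin n) (Fin n) ℂ) with hVdef
  have hV : star V * V = 1 := Matrix.mem_unitaryGroup_iff'.mp hA.eigenvectorUnitary.2
  have hAspec : A = V * Matrix.diagonal (fun i => ((hA.eigenvalues i : ℝ) : ℂ)) * star V := by
    exact hA.spectral_theorem
  set dabs : Fin n → ℂ := fun i => ((|hA.eigenvalues i| : ℝ) : ℂ) with hdabs
  have hSpsd : (V * Matrix.diagonal dabs * star V).PosSemidef := by
    have hd : Matrix.PosSemidef (Matrix.diagonal dabs) := by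
      refine Matrix.PosSemidef.diagonal fun i => ?_
      rw [hdabs]
      exact Complex.zero_le_real.mpr (abs_nonneg _)
    simpa [Matrix.star_eq_conjTranspose] using hd.mul_mul_conjTranspose_same V
  have hSsq : (V * Matrix.diagonal dabs * star V) ^ 2 = Aᴴ * A := by
    rw [hA.eq, pow_two, conj_mul_conj hV]
    conv_rhs => rw [hAspec]
    rw [conj_mul_conj hV]
    have heq : (fun i => dabs i * dabs i)
        = fun i => ((hA.eigenvalues i : ℝ) : ℂ) * ((hA.eigenvalues i : ℝ) : ℂ) := by
      funext i
      simp only [hdabs]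
      norm_cast
      rw [abs_mul_abs_self]
    rw [heq]
  have hkey : (V * Matrix.diagonal dabs * star V)
      = (Matrix.posSemidef_conjTranspose_mul_self A).sqrt :=
    hSpsd.eq_sqrt_of_sq_eq _ hSsq
  rw [tn, ← hkey, conj_trace hV, hdabs]
  rw [Complex.re_sum]
  exact Finset.sum_congr rfl fun i _ => Complex.ofReal_re _

lemma trace_mul_sign_le {A : Matrix (Fin n) (Fin n) ℂ} (hA : A.IsHermitian)
    {C : Matrix (Fin n) (Fin n) ℂ} (hC : Cᴴ * C = 1) :
    ((C * A).trace).re ≤ tn A := by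
  rw [← Matrix.star_eq_conjTranspose] at hC
  set V : Matrix (Fin n) (Fin n) ℂ := (hA.eigenvectorUnitary : Matrix (Fin n) (Fin n) ℂ) with hVdef
  have hV : star V * V = 1 := Matrix.mem_unitaryGroup_iff'.mp hA.eigenvectorUnitary.2
  have hV' : V * star V = 1 := Matrix.mem_unitaryGroup_iff.mp hA.eigenvectorUnitary.2
  have hAspec : A = V * Matrix.diagonal (fun i => ((hA.eigenvalues i : ℝ) : ℂ)) * star V := by
    exact hA.spectral_theorem
  set W : Matrix (Fin n) (Fin n) ℂ := star V * C * V with hW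
  have hWu : Wᴴ * W = 1 := by
    rw [← Matrix.star_eq_conjTranspose, hW, Matrix.star_mul, Matrix.star_mul, star_star]
    have h1 : star V * (star C * V) * (star V * C * V)
        = star V * (star C * (V * star V) * C) * V := by simp only [Matrix.mul_assoc]
    rw [h1, hV', Matrix.mul_one, hC, Matrix.mul_one, hV]
  have htr : (C * A).trace
      = (W * Matrix.diagonal (fun i => ((hA.eigenvalues i : ℝ) : ℂ))).trace := by
    conv_lhs => rw [hAspec]
    rw [← Matrix.mul_assoc, ← Matrix.mul_assoc, Matrix.trace_mul_comm, hW]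
    simp only [Matrix.mul_assoc]
  have htr2 : (W * Matrix.diagonal (fun i => ((hA.eigenvalues i : ℝ) : ℂ))).trace
      = ∑ i, W i i * ((hA.eigenvalues i : ℝ) : ℂ) := by
    simp [Matrix.trace, Matrix.mul_apply, Matrix.diagonal_apply, Matrix.diag]
  rw [htr, htr2, tn_eq_sum_abs hA, Complex.re_sum]
  refine Finset.sum_le_sum fun i _ => ?_
  have hb : ‖W i i‖ ≤ 1 := entry_norm_le_one hWu i i
  have hre : (W i i * ((hA.eigenvalues i : ℝ) : ℂ)).re = (W i i).re * hA.eigenvalues i := by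
    simp [Complex.mul_re]
  rw [hre]
  calc (W i i).re * hA.eigenvalues i ≤ |(W i i).re * hA.eigenvalues i| := le_abs_self _
    _ = |(W i i).re| * |hA.eigenvalues i| := abs_mul _ _
    _ ≤ 1 * |hA.eigenvalues i| := by
        refine mul_le_mul_of_nonneg_right ?_ (abs_nonneg _)
        calc |(W i i).re| ≤ ‖W i i‖ := Complex.abs_re_le_norm _
          _ ≤ 1 := hb
    _ = |hA.eigenvalues i| := one_mul _

lemma exists_sign {A : Matrix (Fin n) (Fin n) ℂ} (hA : A.IsHermitian) :
    ∃ C : Matrix (Fin n) (Fin n) ℂ,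
    Cᴴ * C = 1 ∧ Cᴴ = C ∧ ((C * A).trace).re = tn A := by
  set V : Matrix (Fin n) (Fin n) ℂ := (hA.eigenvectorUnitary : Matrix (Fin n) (Fin n) ℂ) with hVdef
  have hV : star V * V = 1 := Matrix.mem_unitaryGroup_iff'.mp hA.eigenvectorUnitary.2
  have hV' : V * star V = 1 := Matrix.mem_unitaryGroup_iff.mp hA.eigenvectorUnitary.2
  have hAspec : A = V * Matrix.diagonal (fun i => ((hA.eigenvalues i : ℝ) : ℂ)) * star V := by
    exact hA.spectral_theorem
  set s : Fin n → ℂ := fun i => if hA.eigenvalues i < 0 then -1 else 1 with hs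
  have hCher : (V * Matrix.diagonal s * star V)ᴴ = V * Matrix.diagonal s * star V := by
    rw [conj_conjTranspose]
    rw [show (fun i => star (s i)) = s from funext fun i => by
      simp only [hs]; split <;> simp]
  refine ⟨V * Matrix.diagonal s * star V, ?_, hCher, ?_⟩
  · rw [hCher, conj_mul_conj hV]
    have : (fun i => s i * s i) = fun _ => (1 : ℂ) := by
      funext i
      simp only [hs]
      split <;> ring
    rw [this, Matrix.diagonal_one, Matrix.mul_one, hV']
  · conv_lhs => rw [hAspec]
    rw [conj_mul_conj hV]
    have hprod : (fun i => s i * ((hA.eigenvalues i : ℝ) : ℂ))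
        = fun i => ((|hA.eigenvalues i| : ℝ) : ℂ) := by
      funext i
      simp only [hs]
      split
      · rename_i hneg
        rw [abs_of_neg hneg]
        push_cast
        ring
      · rename_i hpos
        rw [abs_of_nonneg (not_lt.mp hpos)]
        push_cast
        ring
    rw [hprod, conj_trace hV, tn_eq_sum_abs hA, Complex.re_sum]
    exact Finset.sum_congr rfl fun i _ => Complex.ofReal_re _

lemma tn_add_le {A B : Matrix (Fin n) (Fin n) ℂ}
    (hA : A.IsHermitian) (hB : B.IsHermitian) :
    tn (A + B) ≤ tn A + tn B := by
  obtain ⟨C, hCu, _, hCeq⟩ := exists_sign (hA.add hB)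
  rw [← hCeq, Matrix.mul_add, Matrix.trace_add, Complex.add_re]
  exact add_le_add (trace_mul_sign_le hA hCu) (trace_mul_sign_le hB hCu)

end spectral

lemma trace_cs (A B : Matrix (Fin n) (Fin n) ℂ) :
    ((Aᴴ * B).trace).re ≤ Real.sqrt ((Aᴴ * A).trace).re * Real.sqrt ((Bᴴ * B).trace).re := by
  classical
  set v : EuclideanSpace ℂ (Fin n × Fin n) :=
    WithLp.toLp 2 (fun p : Fin n × Fin n => A p.1 p.2) with hv
  set w : EuclideanSpace ℂ (Fin n × Fin n) :=
    WithLp.toLp 2 (fun p : Fin n × Fin n => B p.1 p.2) with hw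
  have hinner : ∀ (M N : Matrix (Fin n) (Fin n) ℂ) (x y : EuclideanSpace ℂ (Fin n × Fin n)),
      (∀ p, x p = M p.1 p.2) → (∀ p, y p = N p.1 p.2) →
      (inner ℂ x y : ℂ) = (Mᴴ * N).trace := by
    intro M N x y hx hy
    rw [Matrix.trace]
    simp only [PiLp.inner_apply, RCLike.inner_apply, hx, hy, Matrix.diag, Matrix.mul_apply,
      Matrix.conjTranspose_apply, Fintype.sum_prod_type]
    rw [Finset.sum_comm]
    refine Finset.sum_congr rfl fun i _ => Finset.sum_congr rfl fun j _ => ?_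
    rw [Complex.star_def, mul_comm]
  have hvw : (inner ℂ v w : ℂ) = (Aᴴ * B).trace :=
    hinner A B v w (fun p => rfl) (fun p => rfl)
  have hvv : (inner ℂ v v : ℂ) = (Aᴴ * A).trace :=
    hinner A A v v (fun p => rfl) (fun p => rfl)
  have hww : (inner ℂ w w : ℂ) = (Bᴴ * B).trace :=
    hinner B B w w (fun p => rfl) (fun p => rfl)
  have hnv : ((Aᴴ * A).trace).re = ‖v‖ ^ 2 := by
    rw [← hvv, inner_self_eq_norm_sq_to_K (𝕜 := ℂ)]
    norm_cast
  have hnw : ((Bᴴ * B).trace).re = ‖w‖ ^ 2 := by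
    rw [← hww, inner_self_eq_norm_sq_to_K (𝕜 := ℂ)]
    norm_cast
  calc ((Aᴴ * B).trace).re = (inner ℂ v w : ℂ).re := by rw [hvw]
    _ ≤ ‖(inner ℂ v w : ℂ)‖ := Complex.re_le_norm _
    _ ≤ ‖v‖ * ‖w‖ := norm_inner_le_norm v w
    _ = _ := by rw [hnv, hnw, Real.sqrt_sq (norm_nonneg v), Real.sqrt_sq (norm_nonneg w)]

/-- **Gentle measurement lemma.**
If `ρ` is a density matrix, `P` an orthogonal projection with `Tr(P ρ) ≥ 1 − δ`
and `Tr(P ρ) > 0`, then the post-measurement state `ρ' = (Tr(P ρ))⁻¹ • (P ρ P)`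
obtained by post-selecting on outcome `1` satisfies `d(ρ, ρ') ≤ 2√δ`. -/
theorem gentle_measurement {n : ℕ}
    (ρ P : Matrix (Fin n) (Fin n) ℂ)
    (hρ : ρ.PosSemidef) (hρtr : ρ.trace = 1)
    (hPher : Pᴴ = P) (hPidem : P * P = P)
    (δ : ℝ) (hδ : 0 ≤ δ)
    (h1 : 1 - δ ≤ ((P * ρ).trace).re) (h2 : 0 < ((P * ρ).trace).re) :
    traceDist ρ (((P * ρ).trace)⁻¹ • (P * ρ * P)) ≤ 2 * Real.sqrt δ := by
  set Q : Matrix (Fin n) (Fin n) ℂ := 1 - P with hQ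
  have hQher : Qᴴ = Q := by
    rw [hQ, Matrix.conjTranspose_sub, hPher, Matrix.conjTranspose_one]
  have hQidem : Q * Q = Q := by
    rw [hQ]
    rw [Matrix.mul_sub, Matrix.sub_mul, Matrix.sub_mul, hPidem]
    simp
  set p : ℂ := (P * ρ).trace with hp
  set q : ℝ := p.re with hq
  -- PSD facts
  have hPρP : (P * ρ * P).PosSemidef := by
    have := hρ.conjTranspose_mul_mul_same P
    rwa [hPher] at this
  have hQρQ : (Q * ρ * Q).PosSemidef := by
    have := hρ.conjTranspose_mul_mul_same Q
    rwa [hQher] at this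
  -- trace identities
  have htrP : (P * ρ * P).trace = p := by
    rw [Matrix.trace_mul_cycle, hPidem, hp]
  have htrQ : (Q * ρ * Q).trace = 1 - p := by
    rw [Matrix.trace_mul_cycle, hQidem, hQ, Matrix.sub_mul,
      Matrix.one_mul, Matrix.trace_sub, hρtr, hp]
  have hpreal : p = (q : ℂ) := by
    rw [← htrP, trace_real hPρP.isHermitian, htrP]
  have hqpos : 0 < q := h2
  have h1q : 0 ≤ 1 - q := by
    have := trace_re_nonneg hQρQ
    rw [htrQ] at this
    simpa using this
  have h1qδ : 1 - q ≤ δ := by linarith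
  -- decomposition
  set X : Matrix (Fin n) (Fin n) ℂ := Q * ρ * P + P * ρ * Q with hX
  set r : ℝ := (1 - q) / q with hr
  have hrnn : 0 ≤ r := div_nonneg h1q (le_of_lt hqpos)
  have hsc : (1 : ℂ) - p⁻¹ = -((r : ℂ)) := by
    have hq0 : (q : ℂ) ≠ 0 := by
      exact_mod_cast ne_of_gt hqpos
    rw [hpreal, hr]
    push_cast
    field_simp
    ring
  have hdecomp : ρ - p⁻¹ • (P * ρ * P)
      = Q * ρ * Q + X + (-((r:ℂ)) • (P * ρ * P)) := by
    rw [← hsc, hX, hQ]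
    simp only [Matrix.sub_mul, Matrix.mul_sub, Matrix.one_mul, Matrix.mul_one,
      sub_smul, one_smul]
    abel
  -- Hermitian facts
  have hXher : X.IsHermitian := by
    rw [Matrix.IsHermitian, hX, Matrix.conjTranspose_add, Matrix.conjTranspose_mul,
      Matrix.conjTranspose_mul, Matrix.conjTranspose_mul, Matrix.conjTranspose_mul,
      hPher, hQher, hρ.isHermitian.eq]
    rw [Matrix.mul_assoc, Matrix.mul_assoc]
    exact add_comm _ _
  have hTher : ((-((r:ℂ))) • (P * ρ * P)).IsHermitian := by
    rw [Matrix.IsHermitian, Matrix.conjTranspose_smul, hPρP.isHermitian.eq]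
    congr 1
    simp [Complex.ext_iff]
  -- tn of first and third terms
  have htn1 : tn (Q * ρ * Q) = 1 - q := by
    rw [tn_psd hQρQ, htrQ]
    simp
    exact hq.symm
  have htn3 : tn ((-((r:ℂ))) • (P * ρ * P)) = 1 - q := by
    rw [show (-((r:ℂ))) • (P * ρ * P) = -(((r:ℂ)) • (P * ρ * P)) from by
      rw [neg_smul], tn_neg, tn_smul hrnn, tn_psd hPρP, htrP, hpreal, hr]
    field_simp
    rw [Complex.ofReal_re]
    ring
  -- tn of the cross term
  have htnX : tn X ≤ 2 * (Real.sqrt δ * 1) := by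
    obtain ⟨C, hCu, hCher, hCeq⟩ := exists_sign hXher
    have hCC : C * C = 1 := by rw [← hCu, hCher]
    set S : Matrix (Fin n) (Fin n) ℂ := hρ.sqrt with hS
    have hSher : Sᴴ = S := hρ.posSemidef_sqrt.isHermitian.eq
    have hSS : S * S = ρ := hρ.sqrt_mul_self
    set A₀ : Matrix (Fin n) (Fin n) ℂ := S * Q * C with hA₀
    set B₀ : Matrix (Fin n) (Fin n) ℂ := S * P with hB₀
    have hA₀H : A₀ᴴ = C * Q * S := by
      rw [hA₀, Matrix.conjTranspose_mul, Matrix.conjTranspose_mul, hCher, hQher, hSher,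
        Matrix.mul_assoc]
    have hAB : A₀ᴴ * B₀ = C * (Q * ρ * P) := by
      rw [hA₀H, hB₀, ← hSS]
      simp only [Matrix.mul_assoc]
    have hAA : ((A₀ᴴ * A₀).trace).re = 1 - q := by
      have e1 : A₀ᴴ * A₀ = C * (Q * ρ * Q) * C := by
        rw [hA₀H, hA₀, ← hSS]
        simp only [Matrix.mul_assoc]
      rw [e1, Matrix.trace_mul_cycle, Matrix.mul_assoc, ← Matrix.mul_assoc C C, hCC,
        Matrix.one_mul, htrQ]
      simp
      exact hq.symm
    have hBB : ((B₀ᴴ * B₀).trace).re = q := by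
      have e1 : B₀ᴴ * B₀ = P * ρ * P := by
        rw [hB₀, Matrix.conjTranspose_mul, hPher, hSher, ← hSS]
        simp only [Matrix.mul_assoc]
      rw [e1, htrP, hpreal]
      simp
    have hcross : ((C * (Q * ρ * P)).trace).re ≤ Real.sqrt δ * 1 := by
      calc ((C * (Q * ρ * P)).trace).re = ((A₀ᴴ * B₀).trace).re := by rw [hAB]
        _ ≤ Real.sqrt ((A₀ᴴ * A₀).trace).re * Real.sqrt ((B₀ᴴ * B₀).trace).re :=
            trace_cs A₀ B₀
        _ ≤ Real.sqrt δ * 1 := by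
            rw [hAA, hBB]
            refine mul_le_mul (Real.sqrt_le_sqrt h1qδ) ?_ (Real.sqrt_nonneg _)
              (Real.sqrt_nonneg _)
            rw [show (1:ℝ) = Real.sqrt 1 from (Real.sqrt_one).symm]
            exact Real.sqrt_le_sqrt (by linarith)
    have hsym : ((C * (P * ρ * Q)).trace).re = ((C * (Q * ρ * P)).trace).re := by
      have e1 : (C * (Q * ρ * P))ᴴ = P * ρ * Q * C := by
        rw [Matrix.conjTranspose_mul, Matrix.conjTranspose_mul, Matrix.conjTranspose_mul,
          hCher, hPher, hQher, hρ.isHermitian.eq]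
        simp only [Matrix.mul_assoc]
      have e2 : (C * (P * ρ * Q)).trace = star ((C * (Q * ρ * P)).trace) := by
        rw [← Matrix.trace_conjTranspose, e1, Matrix.trace_mul_comm, Matrix.mul_assoc]
      rw [e2]
      simp [Complex.star_def]
    calc tn X = ((C * X).trace).re := hCeq.symm
      _ = ((C * (Q * ρ * P)).trace).re + ((C * (P * ρ * Q)).trace).re := by
          rw [hX, Matrix.mul_add, Matrix.trace_add, Complex.add_re]
      _ = 2 * ((C * (Q * ρ * P)).trace).re := by rw [hsym]; ring
      _ ≤ 2 * (Real.sqrt δ * 1) := by linarith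
  -- assemble
  have hTD : traceDist ρ (p⁻¹ • (P * ρ * P)) = tn (ρ - p⁻¹ • (P * ρ * P)) / 2 := rfl
  have htri : tn (ρ - p⁻¹ • (P * ρ * P)) ≤ (1 - q) + (2 * (Real.sqrt δ * 1)) + (1 - q) := by
    rw [hdecomp]
    calc tn (Q * ρ * Q + X + (-((r:ℂ))) • (P * ρ * P))
        ≤ tn (Q * ρ * Q + X) + tn ((-((r:ℂ))) • (P * ρ * P)) :=
          tn_add_le (hQρQ.isHermitian.add hXher) hTher
      _ ≤ tn (Q * ρ * Q) + tn X + tn ((-((r:ℂ))) • (P * ρ * P)) := by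
          have := tn_add_le hQρQ.isHermitian hXher
          linarith
      _ ≤ (1 - q) + (2 * (Real.sqrt δ * 1)) + (1 - q) := by
          rw [htn1, htn3]
          linarith
  have hfin : 1 - q ≤ Real.sqrt δ := by
    rw [Real.le_sqrt h1q]
    · calc (1 - q) ^ 2 = (1 - q) * (1 - q) := sq (1 - q) ▸ by ring
        _ ≤ δ * 1 := by nlinarith
        _ = δ := mul_one δ
    · exact hδ
  rw [hTD]
  have hsq : Real.sqrt δ * Real.sqrt δ = δ := Real.mul_self_sqrt hδ
  nlinarith [Real.sqrt_nonneg δ, htri, hfin]
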